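/- arXiv:2210.15558 — 2 statements merged into one kernel-verified Lean document; each statement's English description precedes it below -/
import Mathlib

section
/- Suppose ν : U → ℂ is holomorphic on an open set U ⊆ ℂ and μ̃ : U → ℂ is holomorphic. Writing φ_z = (μ̃/4)(1-ν²), (iμ̃/4)(1+ν²), (μ̃/2)ν componentwise, the combination 2X_{zz}Re ν + 2Y_{zz}Im ν + Z_{zz}(|ν|²-1) divided by (|ν|²+1) equals -μ̃ν_z/2, where X_z, Y_z, Z_z denote the given components and subscript z denotes complex differentiation. -/
open Complex

/-- The local computation of the Hopf differential of a minimal immersion: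
with `X_z = (μ̃/4)(1-ν²)`, `Y_z = (iμ̃/4)(1+ν²)`, `Z_z = (μ̃/2)ν`, one has
`(2 X_zz Re ν + 2 Y_zz Im ν + Z_zz (|ν|²-1))/(|ν|²+1) = -μ̃ ν_z / 2`. -/
theorem hopf_differential_formula
    (U : Set ℂ) (hU : IsOpen U) (μ ν : ℂ → ℂ)
    (hμ : DifferentiableOn ℂ μ U) (hν : DifferentiableOn ℂ ν U)
    (p : ℂ) (hp : p ∈ U) :
    let Xz : ℂ → ℂ := fun z => μ z / 4 * (1 - ν z ^ 2)
    let Yz : ℂ → ℂ := fun z => I * μ z / 4 * (1 + ν z ^ 2)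
    let Zz : ℂ → ℂ := fun z => μ z / 2 * ν z
    (2 * deriv Xz p * ((ν p).re : ℂ) + 2 * deriv Yz p * ((ν p).im : ℂ) +
        deriv Zz p * ((‖ν p‖ ^ 2 - 1 : ℝ) : ℂ)) /
      ((‖ν p‖ ^ 2 + 1 : ℝ) : ℂ) = -(μ p) * deriv ν p / 2 := by
  intro Xz Yz Zz
  have hm : HasDerivAt μ (deriv μ p) p :=
    ((hμ p hp).differentiableAt (hU.mem_nhds hp)).hasDerivAt
  have hn : HasDerivAt ν (deriv ν p) p :=
    ((hν p hp).differentiableAt (hU.mem_nhds hp)).hasDerivAt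
  set a := deriv μ p
  set b := deriv ν p
  have hX := ((hm.div_const 4).mul ((hasDerivAt_const p (1 : ℂ)).sub (hn.pow 2))).deriv
  have hY := (((hm.const_mul I).div_const 4).mul
    ((hasDerivAt_const p (1 : ℂ)).add (hn.pow 2))).deriv
  have hZ := ((hm.div_const 2).mul hn).deriv
  change deriv Xz p = _ at hX
  change deriv Yz p = _ at hY
  change deriv Zz p = _ at hZ
  rw [hX, hY, hZ]
  simp only [Xz, Yz, Zz, hX, hY, hZ, Pi.sub_apply, Pi.add_apply, Pi.pow_apply]
  have hre : ((ν p).re : ℂ) = (ν p + starRingEnd ℂ (ν p)) / 2 := by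
    rw [Complex.add_conj]; push_cast; ring
  have him : ((ν p).im : ℂ) = (ν p - starRingEnd ℂ (ν p)) / (2 * I) := by
    rw [Complex.sub_conj]
    field_simp
    norm_cast
    ring
  have habs : ((‖ν p‖ ^ 2 : ℝ) : ℂ) = ν p * starRingEnd ℂ (ν p) := by
    rw [Complex.mul_conj, ← Complex.sq_norm]
  have hne : ((‖ν p‖ ^ 2 + 1 : ℝ) : ℂ) ≠ 0 := by
    simp only [ne_eq, Complex.ofReal_eq_zero]
    positivity
  rw [div_eq_iff hne]
  push_cast [hre, him, habs]
  have hI := Complex.I_ne_zero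
  field_simp
  ring_nf
end

section
/- Let μ be a holomorphic function on an open connected U ⊆ ℂ, not identically zero, and ν meromorphic on U such that at every zero p of μ of order m, ν has a pole at p of order exactly m/2. Then the three functions (μ/2)(1-ν²), (iμ/2)(1+ν²), and μν extend holomorphically across the zeros of μ, and they have no common zero on U. -/
open Complex Filter
open scoped Topology

/-- Let `μ` be holomorphic on an open connected `U`, not identically zero, and `ν`
holomorphic on `U` away from the zeros of `μ`, such that at every zero `p` of `μ`,
`μ` vanishes to some even order `2m` (`m > 0`) and `ν` has a pole of order exactly `m`
at `p`.  Then the functions `(μ/2)(1-ν²)`, `(iμ/2)(1+ν²)`, `μν` extend holomorphically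
across the zeros of `μ` and the extensions have no common zero on `U`. -/
theorem weierstrass_pair_extends
    (U : Set ℂ) (hU : IsOpen U) (hUconn : IsConnected U)
    (μ ν : ℂ → ℂ)
    (hμ : DifferentiableOn ℂ μ U) (hμne : ∃ p ∈ U, μ p ≠ 0)
    (hν : DifferentiableOn ℂ ν (U \ μ ⁻¹' {0}))
    (hord : ∀ p ∈ U, μ p = 0 →
      ∃ m : ℕ, 0 < m ∧ ∃ g h : ℂ → ℂ,
        AnalyticAt ℂ g p ∧ AnalyticAt ℂ h p ∧ g p ≠ 0 ∧ h p ≠ 0 ∧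
        (∀ᶠ z in nhds p, μ z = (z - p) ^ (2 * m) * g z) ∧
        (∀ᶠ z in nhdsWithin p {p}ᶜ, ν z = h z / (z - p) ^ m)) :
    ∃ Φ₁ Φ₂ Φ₃ : ℂ → ℂ,
      DifferentiableOn ℂ Φ₁ U ∧ DifferentiableOn ℂ Φ₂ U ∧ DifferentiableOn ℂ Φ₃ U ∧
      (∀ z ∈ U, μ z ≠ 0 →
        Φ₁ z = μ z / 2 * (1 - ν z ^ 2) ∧
        Φ₂ z = I * μ z / 2 * (1 + ν z ^ 2) ∧
        Φ₃ z = μ z * ν z) ∧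
      (∀ z ∈ U, ¬(Φ₁ z = 0 ∧ Φ₂ z = 0 ∧ Φ₃ z = 0)) := by
  classical
  choose m hm g h hg hh hg0 hh0 hμe hνe using hord
  set Φ₁ : ℂ → ℂ := fun z =>
    if hz : z ∈ U ∧ μ z = 0 then -(g z hz.1 hz.2 z * (h z hz.1 hz.2 z) ^ 2) / 2
    else μ z / 2 * (1 - ν z ^ 2) with hΦ₁def
  set Φ₂ : ℂ → ℂ := fun z =>
    if hz : z ∈ U ∧ μ z = 0 then I * (g z hz.1 hz.2 z * (h z hz.1 hz.2 z) ^ 2) / 2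
    else I * μ z / 2 * (1 + ν z ^ 2) with hΦ₂def
  set Φ₃ : ℂ → ℂ := fun z =>
    if hz : z ∈ U ∧ μ z = 0 then 0 else μ z * ν z with hΦ₃def
  -- the set where μ does not vanish is open
  have hV : IsOpen (U \ μ ⁻¹' {0}) := by
    have : U \ μ ⁻¹' {0} = U ∩ μ ⁻¹' ({0}ᶜ) := by
      ext z; simp [Set.mem_diff]
    rw [this]
    exact hμ.continuousOn.isOpen_inter_preimage hU (isOpen_compl_iff.mpr isClosed_singleton)
  -- on V the functions are given by the formulas
  have hne : ∀ z, μ z ≠ 0 →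
      Φ₁ z = μ z / 2 * (1 - ν z ^ 2) ∧
      Φ₂ z = I * μ z / 2 * (1 + ν z ^ 2) ∧
      Φ₃ z = μ z * ν z := by
    intro z hz
    have hnot : ¬ (z ∈ U ∧ μ z = 0) := fun hc => hz hc.2
    refine ⟨?_, ?_, ?_⟩ <;> simp only [hΦ₁def, hΦ₂def, hΦ₃def, dif_neg hnot]
  -- differentiability at points of V
  have hdiffV : ∀ z ∈ U \ μ ⁻¹' {0},
      DifferentiableAt ℂ Φ₁ z ∧ DifferentiableAt ℂ Φ₂ z ∧ DifferentiableAt ℂ Φ₃ z := by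
    intro z hz
    have hmem : U \ μ ⁻¹' {0} ∈ 𝓝 z := hV.mem_nhds hz
    have hμz : DifferentiableAt ℂ μ z := hμ.differentiableAt (hU.mem_nhds hz.1)
    have hνz : DifferentiableAt ℂ ν z := hν.differentiableAt hmem
    have hμ0 : ∀ w ∈ U \ μ ⁻¹' {0}, μ w ≠ 0 := by
      intro w hw hw0; exact hw.2 (by simpa using hw0)
    refine ⟨?_, ?_, ?_⟩
    · refine DifferentiableAt.congr_of_eventuallyEq
        (((hμz.div_const 2).mul ((differentiableAt_const 1).sub (hνz.pow 2)))) ?_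
      exact eventuallyEq_of_mem hmem fun w hw => (hne w (hμ0 w hw)).1
    · refine DifferentiableAt.congr_of_eventuallyEq
        ((((differentiableAt_const I).mul hμz).div_const 2).mul
          ((differentiableAt_const 1).add (hνz.pow 2))) ?_
      exact eventuallyEq_of_mem hmem fun w hw => (hne w (hμ0 w hw)).2.1
    · refine DifferentiableAt.congr_of_eventuallyEq (hμz.mul hνz) ?_
      exact eventuallyEq_of_mem hmem fun w hw => (hne w (hμ0 w hw)).2.2
  -- differentiability at zeros of μ, together with nonvanishing of Φ₁ there
  have hdiffZ : ∀ p, ∀ (h1 : p ∈ U) (h2 : μ p = 0),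
      DifferentiableAt ℂ Φ₁ p ∧ DifferentiableAt ℂ Φ₂ p ∧ DifferentiableAt ℂ Φ₃ p := by
    intro p h1 h2
    have hgp : AnalyticAt ℂ (g p h1 h2) p := hg p h1 h2
    have hhp : AnalyticAt ℂ (h p h1 h2) p := hh p h1 h2
    have hμp : DifferentiableAt ℂ μ p := hμ.differentiableAt (hU.mem_nhds h1)
    have hgne : ∀ᶠ z in 𝓝 p, g p h1 h2 z ≠ 0 :=
      hgp.continuousAt.eventually_ne (hg0 p h1 h2)
    have hpunct : ∀ᶠ z in 𝓝[≠] p,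
        Φ₁ z = μ z / 2 - g p h1 h2 z * (h p h1 h2 z) ^ 2 / 2 ∧
        Φ₂ z = I * μ z / 2 + I * (g p h1 h2 z * (h p h1 h2 z) ^ 2) / 2 ∧
        Φ₃ z = (z - p) ^ (m p h1 h2) * (g p h1 h2 z * h p h1 h2 z) := by
      filter_upwards [(hμe p h1 h2).filter_mono nhdsWithin_le_nhds,
        hνe p h1 h2, hgne.filter_mono nhdsWithin_le_nhds,
        self_mem_nhdsWithin] with z hμz hνz hgz hzp
      have hzp' : z - p ≠ 0 := sub_ne_zero.mpr hzp
      have hpow : (z - p) ^ (m p h1 h2) ≠ 0 := pow_ne_zero _ hzp'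
      have hμne0 : μ z ≠ 0 := by
        rw [hμz]; exact mul_ne_zero (pow_ne_zero _ hzp') hgz
      have hsq : (z - p) ^ (2 * m p h1 h2) = ((z - p) ^ (m p h1 h2)) ^ 2 := by
        rw [← pow_mul, mul_comm]
      obtain ⟨e1, e2, e3⟩ := hne z hμne0
      refine ⟨?_, ?_, ?_⟩
      · rw [e1, hνz, hμz, hsq]; field_simp
      · rw [e2, hνz, hμz, hsq]; field_simp
      · rw [e3, hνz, hμz, hsq]; field_simp
    have hP : (⟨h1, h2⟩ : p ∈ U ∧ μ p = 0) = ⟨h1, h2⟩ := rfl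
    have hval₁ : Φ₁ p = -(g p h1 h2 p * (h p h1 h2 p) ^ 2) / 2 := by
      simp only [hΦ₁def, dif_pos (⟨h1, h2⟩ : p ∈ U ∧ μ p = 0)]
    have hval₂ : Φ₂ p = I * (g p h1 h2 p * (h p h1 h2 p) ^ 2) / 2 := by
      simp only [hΦ₂def, dif_pos (⟨h1, h2⟩ : p ∈ U ∧ μ p = 0)]
    have hval₃ : Φ₃ p = 0 := by
      simp only [hΦ₃def, dif_pos (⟨h1, h2⟩ : p ∈ U ∧ μ p = 0)]
    have hfull₁ : Φ₁ =ᶠ[𝓝 p] fun z => μ z / 2 - g p h1 h2 z * (h p h1 h2 z) ^ 2 / 2 := by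
      rw [Filter.EventuallyEq, ← nhdsNE_sup_pure p, eventually_sup]
      refine ⟨hpunct.mono fun z hz => hz.1, ?_⟩
      rw [eventually_pure, hval₁, h2]; ring
    have hfull₂ : Φ₂ =ᶠ[𝓝 p] fun z =>
        I * μ z / 2 + I * (g p h1 h2 z * (h p h1 h2 z) ^ 2) / 2 := by
      rw [Filter.EventuallyEq, ← nhdsNE_sup_pure p, eventually_sup]
      refine ⟨hpunct.mono fun z hz => hz.2.1, ?_⟩
      rw [eventually_pure, hval₂, h2]; ring
    have hfull₃ : Φ₃ =ᶠ[𝓝 p] fun z =>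
        (z - p) ^ (m p h1 h2) * (g p h1 h2 z * h p h1 h2 z) := by
      rw [Filter.EventuallyEq, ← nhdsNE_sup_pure p, eventually_sup]
      refine ⟨hpunct.mono fun z hz => hz.2.2, ?_⟩
      rw [eventually_pure, hval₃]
      rw [sub_self, zero_pow (hm p h1 h2).ne', zero_mul]
    refine ⟨?_, ?_, ?_⟩
    · exact DifferentiableAt.congr_of_eventuallyEq
        ((hμp.div_const 2).sub
          ((hgp.differentiableAt.mul (hhp.differentiableAt.pow 2)).div_const 2)) hfull₁
    · exact DifferentiableAt.congr_of_eventuallyEq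
        ((((differentiableAt_const I).mul hμp).div_const 2).add
          (((differentiableAt_const I).mul
            (hgp.differentiableAt.mul (hhp.differentiableAt.pow 2))).div_const 2)) hfull₂
    · exact DifferentiableAt.congr_of_eventuallyEq
        (((differentiableAt_id.sub (differentiableAt_const p)).pow _).mul
          (hgp.differentiableAt.mul hhp.differentiableAt)) hfull₃
  have hdiff : ∀ z ∈ U,
      DifferentiableAt ℂ Φ₁ z ∧ DifferentiableAt ℂ Φ₂ z ∧ DifferentiableAt ℂ Φ₃ z := by
    intro z hz
    by_cases h0 : μ z = 0
    · exact hdiffZ z hz h0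
    · exact hdiffV z ⟨hz, fun hc => h0 (by simpa using hc)⟩
  refine ⟨Φ₁, Φ₂, Φ₃,
    fun z hz => ((hdiff z hz).1).differentiableWithinAt,
    fun z hz => ((hdiff z hz).2.1).differentiableWithinAt,
    fun z hz => ((hdiff z hz).2.2).differentiableWithinAt,
    fun z _ hz0 => hne z hz0, ?_⟩
  intro z hz ⟨e1, e2, _⟩
  by_cases h0 : μ z = 0
  · have hval₁ : Φ₁ z = -(g z hz h0 z * (h z hz h0 z) ^ 2) / 2 := by
      simp only [hΦ₁def, dif_pos (⟨hz, h0⟩ : z ∈ U ∧ μ z = 0)]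
    rw [hval₁] at e1
    have : g z hz h0 z * (h z hz h0 z) ^ 2 ≠ 0 :=
      mul_ne_zero (hg0 z hz h0) (pow_ne_zero _ (hh0 z hz h0))
    apply this
    field_simp at e1
    linear_combination -e1
  · obtain ⟨f1, f2, _⟩ := hne z h0
    rw [f1] at e1; rw [f2] at e2
    have hμ0 : μ z = 0 := by
      have hI : (I : ℂ) * I = -1 := Complex.I_mul_I
      have key : μ z = (μ z / 2 * (1 - ν z ^ 2)) - I * (I * μ z / 2 * (1 + ν z ^ 2)) := by
        linear_combination (μ z / 2 * (1 + ν z ^ 2)) * hI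
      rw [key, e1, e2]; ring
    exact h0 hμ0
end
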